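/- Let n ≥ 1, let α, β > 0 with α + β < 1, set c = 1 − α − β, and let Ã₁, …, Ã_T be n×n real row-stochastic matrices with ℒ_t = I − c·Ã_tᵀ. Define X₀ = I and X_t = α·ℒ_t⁻¹ + β·ℒ_t⁻¹·X_{t−1} for t ≥ 1. Fix any s and let π_{t,s} = X_t·e_s be the s-th column of X_t. Then for every t ≥ 0, π_{t,s} is a probability vector: its entries are nonnegative and sum to 1. -/

import Mathlib

open Matrix BigOperators Finset

def RowStochastic {n : ℕ} (A : Matrix (Fin n) (Fin n) ℝ) : Prop :=
  (∀ i j, 0 ≤ A i j) ∧ ∀ i, ∑ j, A i j = 1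

section aux

attribute [local instance] Matrix.linftyOpNormedRing Matrix.linftyOpNormedAlgebra

lemma key_aux {n : ℕ} (c : ℝ) (hc0 : 0 < c) (hc1 : c < 1)
    (A : Matrix (Fin n) (Fin n) ℝ) (hA : RowStochastic A) :
    IsUnit ((1 : Matrix (Fin n) (Fin n) ℝ) - c • A) ∧
      (∀ i j, 0 ≤ ((1 : Matrix (Fin n) (Fin n) ℝ) - c • A)⁻¹ i j) ∧
      (∀ i, ∑ j, ((1 : Matrix (Fin n) (Fin n) ℝ) - c • A)⁻¹ i j = 1 / (1 - c)) := by
  set B : Matrix (Fin n) (Fin n) ℝ := c • A with hB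
  have hnorm : ‖B‖ < 1 := by
    have h1 : ‖B‖₊ ≤ (⟨c, hc0.le⟩ : NNReal) := by
      rw [Matrix.linfty_opNNNorm_def]
      apply Finset.sup_le
      intro i _
      refine NNReal.coe_le_coe.mp ?_
      push_cast
      have : ∀ j, ‖B i j‖ = c * A i j := by
        intro j
        simp [hB, Matrix.smul_apply, Real.norm_eq_abs, abs_mul, abs_of_pos hc0,
          abs_of_nonneg (hA.1 i j)]
      rw [Finset.sum_congr rfl fun j _ => this j, ← Finset.mul_sum, hA.2 i, mul_one]
      exact le_rfl
    calc ‖B‖ ≤ c := h1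
    _ < 1 := hc1
  have hunit : IsUnit ((1 : Matrix (Fin n) (Fin n) ℝ) - B) :=
    isUnit_one_sub_of_norm_lt_one hnorm
  have hinv : ((1 : Matrix (Fin n) (Fin n) ℝ) - B)⁻¹ = Ring.inverse (1 - B) :=
    Matrix.nonsing_inv_eq_ringInverse _
  have hsum : HasSum (fun k : ℕ => B ^ k) (((1 : Matrix (Fin n) (Fin n) ℝ) - B)⁻¹) := by
    rw [hinv]
    exact hasSum_geom_series_inverse B hnorm
  -- entrywise nonnegativity of powers
  have hpow : ∀ (k : ℕ) (i j : Fin n), 0 ≤ (B ^ k) i j := by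
    intro k
    induction k with
    | zero => intro i j; by_cases h : i = j <;> simp [pow_zero, Matrix.one_apply, h]
    | succ k ih =>
      intro i j
      rw [pow_succ, Matrix.mul_apply]
      exact Finset.sum_nonneg fun l _ =>
        mul_nonneg (ih i l) (mul_nonneg hc0.le (hA.1 l j))
  have hentry : ∀ i j, HasSum (fun k : ℕ => (B ^ k) i j)
      (((1 : Matrix (Fin n) (Fin n) ℝ) - B)⁻¹ i j) := by
    intro i j
    exact hsum.mapL (LinearMap.toContinuousLinearMap
      { toFun := fun M : Matrix (Fin n) (Fin n) ℝ => M i j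
        map_add' := fun M N => rfl
        map_smul' := fun (r : ℝ) M => rfl })
  have hnonneg : ∀ i j, 0 ≤ ((1 : Matrix (Fin n) (Fin n) ℝ) - B)⁻¹ i j := by
    intro i j
    exact (hentry i j).nonneg fun k => hpow k i j
  refine ⟨hunit, hnonneg, ?_⟩
  -- row sums
  intro i
  have hu : ((1 : Matrix (Fin n) (Fin n) ℝ) - B) *ᵥ (fun _ => (1 : ℝ)) =
      fun _ => (1 - c : ℝ) := by
    funext l
    simp [Matrix.mulVec, dotProduct, Matrix.sub_apply, Matrix.one_apply, hB,
      Matrix.smul_apply, Finset.sum_sub_distrib, ← Finset.mul_sum, hA.2 l]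
  have h2 : ((1 : Matrix (Fin n) (Fin n) ℝ) - B)⁻¹ *ᵥ (((1 : Matrix (Fin n) (Fin n) ℝ) - B) *ᵥ (fun _ => (1:ℝ))) = fun _ => (1:ℝ) := by
    rw [Matrix.mulVec_mulVec, Matrix.nonsing_inv_mul _ (Matrix.isUnit_iff_isUnit_det _ |>.mp hunit), Matrix.one_mulVec]
  rw [hu] at h2
  have h3 := congrFun h2 i
  simp only [Matrix.mulVec, dotProduct] at h3
  have hc' : (1 : ℝ) - c ≠ 0 := by linarith
  rw [← Finset.sum_mul] at h3
  rw [eq_div_iff hc']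
  exact h3

end aux

theorem stmt_18 (n : ℕ) (hn : 1 ≤ n) (α β : ℝ) (hα : 0 < α) (hβ : 0 < β)
    (hαβ : α + β < 1) (c : ℝ) (hc : c = 1 - α - β)
    (T : ℕ) (A : ℕ → Matrix (Fin n) (Fin n) ℝ)
    (hA : ∀ t, 1 ≤ t → t ≤ T → RowStochastic (A t))
    (L : ℕ → Matrix (Fin n) (Fin n) ℝ)
    (hL : ∀ t, L t = 1 - c • (A t)ᵀ)
    (X : ℕ → Matrix (Fin n) (Fin n) ℝ)
    (hX0 : X 0 = 1)
    (hXt : ∀ t, 1 ≤ t → t ≤ T → X t = α • (L t)⁻¹ + β • ((L t)⁻¹ * X (t - 1)))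
    (s : Fin n) (e : Fin n → ℝ) (he : e = Pi.single s 1) :
    ∀ t, t ≤ T →
      (∀ i, 0 ≤ (X t *ᵥ e) i) ∧ ∑ i, (X t *ᵥ e) i = 1 := by
  have hc0 : 0 < c := by rw [hc]; linarith
  have hc1 : c < 1 := by rw [hc]; linarith
  have hc' : (1 : ℝ) - c = α + β := by rw [hc]; ring
  intro t
  induction t with
  | zero =>
    intro _
    rw [hX0, Matrix.one_mulVec, he]
    constructor
    · intro i
      rcases eq_or_ne i s with h | h <;> simp [Pi.single_apply, h]
    · simp
  | succ t ih =>
    intro ht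
    have IH := ih (by omega)
    obtain ⟨hunit, hnonneg, hrow⟩ := key_aux c hc0 hc1 (A (t + 1)) (hA (t + 1) (by omega) ht)
    set M : Matrix (Fin n) (Fin n) ℝ := 1 - c • A (t + 1) with hM
    have hLM : L (t + 1) = Mᵀ := by
      rw [hL, hM, Matrix.transpose_sub, Matrix.transpose_one, Matrix.transpose_smul]
    have hLinv : (L (t + 1))⁻¹ = (M⁻¹)ᵀ := by
      rw [hLM, Matrix.transpose_nonsing_inv]
    -- general fact about applying (M⁻¹)ᵀ to a nonneg vector
    have hv : ∀ v : Fin n → ℝ, (∀ i, 0 ≤ v i) →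
        (∀ i, 0 ≤ ((M⁻¹)ᵀ *ᵥ v) i) ∧
          ∑ i, ((M⁻¹)ᵀ *ᵥ v) i = (∑ i, v i) / (1 - c) := by
      intro v hv0
      constructor
      · intro i
        simp only [Matrix.mulVec, dotProduct, Matrix.transpose_apply]
        exact Finset.sum_nonneg fun j _ => mul_nonneg (hnonneg j i) (hv0 j)
      · simp only [Matrix.mulVec, dotProduct, Matrix.transpose_apply]
        rw [Finset.sum_comm]
        have : ∀ j : Fin n, ∑ i, M⁻¹ j i * v j = v j / (1 - c) := by
          intro j
          rw [← Finset.sum_mul, hrow j]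
          ring
        rw [Finset.sum_congr rfl fun j _ => this j, Finset.sum_div]
    have hX1 : X (t + 1) *ᵥ e =
        α • ((M⁻¹)ᵀ *ᵥ e) + β • ((M⁻¹)ᵀ *ᵥ (X t *ᵥ e)) := by
      rw [hXt (t + 1) (by omega) ht, hLinv]
      simp [Matrix.add_mulVec, Matrix.smul_mulVec, Matrix.mulVec_mulVec]
    have he0 : ∀ i, 0 ≤ e i := by
      intro i
      rcases eq_or_ne i s with h | h <;> simp [he, Pi.single_apply, h]
    have hes : ∑ i, e i = 1 := by simp [he]
    obtain ⟨h1, h2⟩ := hv e he0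
    obtain ⟨h3, h4⟩ := hv (X t *ᵥ e) IH.1
    constructor
    · intro i
      rw [hX1]
      simp only [Pi.add_apply, Pi.smul_apply, smul_eq_mul]
      exact add_nonneg (mul_nonneg hα.le (h1 i)) (mul_nonneg hβ.le (h3 i))
    · rw [hX1]
      simp only [Pi.add_apply, Pi.smul_apply, smul_eq_mul]
      rw [Finset.sum_add_distrib, ← Finset.mul_sum, ← Finset.mul_sum, h2, h4, hes, IH.2, hc']
      field_simp
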